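/- Let α > 0 and x ∈ ℝ with |x| > α. Then (x + α)/(x − α) > 0, the number s₀ = log((x + α)/(x − α)) is nonzero, and α(1 + cosh s₀)/sinh s₀ = x. -/

import Mathlib

/-- eq. (3.17): for `α > 0` and `|x| > α`, the quotient
`(x + α)/(x − α)` is positive, `s₀ = log((x + α)/(x − α))` is nonzero, and
`α(1 + cosh s₀)/sinh s₀ = x`. -/
theorem explicit_inverse_of_singular_point_function
    (α x : ℝ) (hα : 0 < α) (hx : α < |x|) :
    0 < (x + α) / (x - α) ∧
    Real.log ((x + α) / (x - α)) ≠ 0 ∧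
    α * (1 + Real.cosh (Real.log ((x + α) / (x - α)))) /
        Real.sinh (Real.log ((x + α) / (x - α))) = x := by
  have hcase : α < x ∨ x < -α := by
    rcases abs_cases x with ⟨h, _⟩ | ⟨h, _⟩
    · left; linarith
    · right; linarith
  have hsub : x - α ≠ 0 := by rcases hcase with h | h <;> intro h0 <;> nlinarith
  have ht : 0 < (x + α) / (x - α) := by
    rcases hcase with h | h
    · apply div_pos <;> linarith
    · apply div_pos_of_neg_of_neg <;> linarith
  have htne : (x + α) / (x - α) ≠ 1 := by
    intro h
    have : x + α = x - α := by
      field_simp at h; linarith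
    linarith
  have hlog : Real.log ((x + α) / (x - α)) ≠ 0 := by
    intro h
    exact htne (by
      have := Real.exp_log ht
      rw [h, Real.exp_zero] at this
      linarith)
  refine ⟨ht, hlog, ?_⟩
  rw [Real.cosh_log ht, Real.sinh_log ht]
  have hne : (x + α) ≠ 0 := by rcases hcase with h | h <;> intro h0 <;> nlinarith
  have hsinh : (x + α) / (x - α) - ((x + α) / (x - α))⁻¹ ≠ 0 := by
    rw [inv_div]
    intro h
    have h2 : ((x+α)*(x+α) - (x-α)*(x-α)) / ((x-α)*(x+α)) = 0 := by
      rw [← h]; field_simp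
    have h3 : (x+α)*(x+α) - (x-α)*(x-α) = 0 :=
      (div_eq_zero_iff.mp h2).resolve_right (mul_ne_zero hsub hne)
    rcases hcase with hc | hc <;> nlinarith
  have hx0 : x ≠ 0 := by rcases hcase with h | h <;> intro h0 <;> nlinarith
  have hα0 : α ≠ 0 := ne_of_gt hα
  rw [inv_div] at *
  field_simp
  have hd : (x + α) * (x + α) - (x - α) * (x - α) ≠ 0 := by
    intro h
    have h5 : α * x = 0 := by linear_combination h / 4
    rcases mul_eq_zero.mp h5 with h6 | h6
    · exact hα0 h6
    · exact hx0 h6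
  rw [div_eq_iff (by convert hd using 1; ring)]
  ring
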